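/- The function a(n) has average order √n; that is, (∑_{k=1}^{n} a(k)) / (∑_{k=1}^{n} √k) tends to 1 as n → ∞. Equivalently, ∑_{k=1}^{n} a(k) is asymptotic to (2/3)·n^{3/2}. -/

import Mathlib

open Filter
open Finset

/-- The sum of the small divisors of `n`, i.e. the divisors `d` of `n` with `d^2 ≤ n`. -/
def smallDivSum (n : ℕ) : ℕ := ∑ d ∈ n.divisors.filter (fun d => d ^ 2 ≤ n), d

lemma key (n : ℕ) :
    ∑ k ∈ Finset.Icc 1 n, smallDivSum k
      = ∑ d ∈ Finset.Icc 1 (Nat.sqrt n), d * (n / d + 1 - d) := by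
  unfold smallDivSum
  rw [Finset.sum_comm' (t' := Finset.Icc 1 (Nat.sqrt n))
    (s' := fun d => (Finset.Icc 1 n).filter (fun k => d ∣ k ∧ d ^ 2 ≤ k))]
  · refine Finset.sum_congr rfl fun d hd => ?_
    simp only [Finset.mem_Icc] at hd
    rw [Finset.sum_const, smul_eq_mul, mul_comm]
    congr 1
    have himg : (Finset.Icc 1 n).filter (fun k => d ∣ k ∧ d ^ 2 ≤ k)
        = (Finset.Icc d (n / d)).image (fun j => d * j) := by
      ext k
      simp only [Finset.mem_filter, Finset.mem_Icc, Finset.mem_image]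
      constructor
      · rintro ⟨⟨hk1, hkn⟩, ⟨j, rfl⟩, hsq⟩
        exact ⟨j, ⟨Nat.le_of_mul_le_mul_left (by nlinarith) (by omega : 0 < d),
          Nat.le_div_iff_mul_le (by omega) |>.2 (by linarith [Nat.mul_comm d j])⟩, rfl⟩
      · rintro ⟨j, ⟨hj1, hj2⟩, rfl⟩
        have hd1 : 1 ≤ d := hd.1
        refine ⟨⟨by nlinarith, ?_⟩, ⟨j, rfl⟩, by nlinarith [sq d]⟩
        calc d * j ≤ d * (n / d) := Nat.mul_le_mul_left d hj2
        _ ≤ n := Nat.mul_div_le n d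
    rw [himg, Finset.card_image_of_injective _ (fun a b h => by
      have : 0 < d := by omega
      exact Nat.eq_of_mul_eq_mul_left this h), Nat.card_Icc]
  · intro k d
    simp only [Finset.mem_Icc, Nat.mem_divisors, Finset.mem_filter]
    constructor
    · rintro ⟨⟨hk1, hkn⟩, ⟨hdvd, hk0⟩, hsq⟩
      have hd1 : 1 ≤ d := Nat.pos_of_dvd_of_pos hdvd hk1
      refine ⟨⟨⟨hk1, hkn⟩, hdvd, hsq⟩, hd1, Nat.le_sqrt.2 ?_⟩
      calc d * d = d ^ 2 := (sq d).symm
      _ ≤ k := hsq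
      _ ≤ n := hkn
    · rintro ⟨⟨⟨hk1, hkn⟩, hdvd, hsq⟩, hd1, hds⟩
      exact ⟨⟨hk1, hkn⟩, ⟨hdvd, by omega⟩, hsq⟩

-- sqrt tends to atTop over ℕ
lemma sqrt_nat_atTop : Tendsto (fun n : ℕ => Real.sqrt n) atTop atTop := by
  have h1 : Tendsto (fun x : ℝ => x ^ ((1:ℝ)/2)) atTop atTop :=
    tendsto_rpow_atTop (by norm_num)
  have h2 := h1.comp (tendsto_natCast_atTop_atTop (R := ℝ))
  refine h2.congr fun n => ?_
  simp [Function.comp, Real.sqrt_eq_rpow]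

lemma he : Tendsto (fun n : ℕ => (Real.sqrt n)⁻¹) atTop (nhds 0) :=
  tendsto_inv_atTop_zero.comp sqrt_nat_atTop

lemma hr : Tendsto (fun n : ℕ => (Nat.sqrt n : ℝ) * (Real.sqrt n)⁻¹) atTop (nhds 1) := by
  have h1 : Tendsto (fun n : ℕ => 1 - (Real.sqrt n)⁻¹) atTop (nhds 1) := by
    simpa using (tendsto_const_nhds (x := (1:ℝ))).sub he
  refine tendsto_of_tendsto_of_tendsto_of_le_of_le' h1 tendsto_const_nhds ?_ ?_
  · filter_upwards [eventually_ge_atTop 1] with n hn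
    have hs0 : 0 < Real.sqrt n := Real.sqrt_pos.2 (by exact_mod_cast Nat.succ_le_iff.1 hn)
    have hls : Real.sqrt n - 1 ≤ (Nat.sqrt n : ℝ) := by
      linarith [Real.real_sqrt_lt_nat_sqrt_succ (a := n)]
    have : (Real.sqrt n - 1) * (Real.sqrt n)⁻¹ ≤ (Nat.sqrt n : ℝ) * (Real.sqrt n)⁻¹ :=
      mul_le_mul_of_nonneg_right hls (by positivity)
    calc 1 - (Real.sqrt n)⁻¹ = (Real.sqrt n - 1) * (Real.sqrt n)⁻¹ := by
          field_simp
      _ ≤ _ := this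
  · filter_upwards [eventually_ge_atTop 1] with n hn
    have hs0 : 0 < Real.sqrt n := Real.sqrt_pos.2 (by exact_mod_cast Nat.succ_le_iff.1 hn)
    calc (Nat.sqrt n : ℝ) * (Real.sqrt n)⁻¹ ≤ Real.sqrt n * (Real.sqrt n)⁻¹ :=
          mul_le_mul_of_nonneg_right Real.nat_sqrt_le_real_sqrt (by positivity)
      _ = 1 := by field_simp

lemma rpow32 {x : ℝ} (hx : 0 ≤ x) : x ^ ((3:ℝ)/2) = Real.sqrt x ^ 3 := by
  rw [Real.sqrt_eq_rpow, ← Real.rpow_natCast (x ^ ((1:ℝ)/2)) 3, ← Real.rpow_mul hx]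
  norm_num

lemma sumsq (s : ℕ) : ∑ d ∈ Finset.Icc 1 s, (d:ℝ)^2 = s*(s+1)*(2*s+1)/6 := by
  induction s with
  | zero => simp
  | succ m ih =>
    rw [Finset.sum_Icc_succ_top (by omega), ih]
    push_cast; ring

lemma sumid (s : ℕ) : ∑ d ∈ Finset.Icc 1 s, (d:ℝ) = s*(s+1)/2 := by
  induction s with
  | zero => simp
  | succ m ih =>
    rw [Finset.sum_Icc_succ_top (by omega), ih]
    push_cast; ring

-- step inequality for sqrt sums
lemma sqrt_step (m : ℕ) :
    (3/2) * Real.sqrt m ≤ Real.sqrt (m+1) ^ 3 - Real.sqrt m ^ 3 ∧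
    Real.sqrt (m+1) ^ 3 - Real.sqrt m ^ 3 ≤ (3/2) * Real.sqrt (m+1) := by
  set a := Real.sqrt m with ha
  set b := Real.sqrt ((m:ℝ)+1) with hb
  have ha0 : 0 ≤ a := Real.sqrt_nonneg _
  have hb0 : 0 ≤ b := Real.sqrt_nonneg _
  have ha2 : a^2 = m := Real.sq_sqrt (by positivity)
  have hb2 : b^2 = (m:ℝ)+1 := Real.sq_sqrt (by positivity)
  have hab : a ≤ b := Real.sqrt_le_sqrt (by push_cast; linarith)
  have key : b^2 = a^2 + 1 := by rw [ha2, hb2]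
  have hcast : Real.sqrt ((m:ℕ)+1 : ℕ) = b := by push_cast; rfl
  constructor
  · nlinarith [mul_nonneg (sq_nonneg (b - a)) (by linarith : (0:ℝ) ≤ 2*b + a)]
  · nlinarith [mul_nonneg (sq_nonneg (b - a)) (by linarith : (0:ℝ) ≤ b + 2*a)]

lemma sumsqrt_lb (n : ℕ) : (2/3) * Real.sqrt n ^ 3 ≤ ∑ k ∈ Finset.Icc 1 n, Real.sqrt k := by
  induction n with
  | zero => simp
  | succ m ih =>
    rw [Finset.sum_Icc_succ_top (by omega)]
    have := (sqrt_step m).2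
    have hc : ((m+1 : ℕ) : ℝ) = (m:ℝ)+1 := by push_cast; ring
    rw [hc]
    linarith

lemma sumsqrt_ub (n : ℕ) :
    ∑ k ∈ Finset.Icc 1 n, Real.sqrt k ≤ (2/3) * Real.sqrt ((n:ℝ)+1) ^ 3 := by
  induction n with
  | zero => simp; norm_num
  | succ m ih =>
    rw [Finset.sum_Icc_succ_top (by omega)]
    have h1 := (sqrt_step (m+1)).1
    have hc : ((m+1 : ℕ) : ℝ) = (m:ℝ)+1 := by push_cast; ring
    rw [hc] at *
    push_cast at h1 ⊢
    linarith

lemma S_bounds (n : ℕ) :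
    ((Nat.sqrt n : ℝ)*n - (Nat.sqrt n)*((Nat.sqrt n)+1)*(2*(Nat.sqrt n)+1)/6
      ≤ ∑ k ∈ Finset.Icc 1 n, (smallDivSum k : ℝ)) ∧
    (∑ k ∈ Finset.Icc 1 n, (smallDivSum k : ℝ)
      ≤ (Nat.sqrt n : ℝ)*n - (Nat.sqrt n)*((Nat.sqrt n)+1)*(2*(Nat.sqrt n)+1)/6
        + (Nat.sqrt n)*((Nat.sqrt n)+1)/2) := by
  set s := Nat.sqrt n with hs
  have hkey : (∑ k ∈ Finset.Icc 1 n, (smallDivSum k : ℝ))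
      = ∑ d ∈ Finset.Icc 1 s, ((d * (n / d + 1 - d) : ℕ) : ℝ) := by
    rw [← Nat.cast_sum, ← Nat.cast_sum, key]
  have hterm : ∀ d ∈ Finset.Icc 1 s,
      ((n:ℝ) - d^2 ≤ ((d * (n / d + 1 - d) : ℕ) : ℝ)) ∧
      (((d * (n / d + 1 - d) : ℕ) : ℝ) ≤ (n:ℝ) - d^2 + d) := by
    intro d hd
    simp only [Finset.mem_Icc] at hd
    obtain ⟨hd1, hds⟩ := hd
    have hdd : d * d ≤ n := Nat.le_sqrt.1 hds
    have hd0 : 0 < d := hd1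
    have hdq : d ≤ n / d := (Nat.le_div_iff_mul_le hd0).2 hdd
    have h1 : d * (n / d) ≤ n := Nat.mul_div_le n d
    have h2 : n < d * (n / d) + d := by
      have := Nat.div_add_mod n d
      have := Nat.mod_lt n hd0
      omega
    have hcast : ((d * (n / d + 1 - d) : ℕ) : ℝ) = (d:ℝ) * ((n/d : ℕ) + 1 - d) := by
      rw [Nat.cast_mul, Nat.cast_sub (by omega), Nat.cast_add, Nat.cast_one]
    have h1' : (d:ℝ) * ((n/d : ℕ):ℝ) ≤ n := by exact_mod_cast h1
    have h2' : (n:ℝ) < (d:ℝ) * ((n/d:ℕ):ℝ) + d := by exact_mod_cast h2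
    constructor
    · rw [hcast]; nlinarith
    · rw [hcast]; nlinarith
  constructor
  · rw [hkey]
    have := Finset.sum_le_sum (fun d hd => (hterm d hd).1)
    calc (s:ℝ)*n - s*(s+1)*(2*s+1)/6
        = ∑ d ∈ Finset.Icc 1 s, ((n:ℝ) - d^2) := by
          rw [Finset.sum_sub_distrib, Finset.sum_const, Nat.card_Icc, sumsq]
          push_cast; ring
      _ ≤ _ := this
  · rw [hkey]
    have := Finset.sum_le_sum (fun d hd => (hterm d hd).2)
    calc (∑ d ∈ Finset.Icc 1 s, ((d * (n / d + 1 - d) : ℕ) : ℝ))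
        ≤ ∑ d ∈ Finset.Icc 1 s, ((n:ℝ) - d^2 + d) := this
      _ = _ := by
          rw [Finset.sum_add_distrib, Finset.sum_sub_distrib, Finset.sum_const,
            Nat.card_Icc, sumsq, sumid]
          push_cast; ring

theorem smallDivSum_average_order_sqrt :
    Tendsto (fun n : ℕ =>
        (∑ k ∈ Finset.Icc 1 n, (smallDivSum k : ℝ)) / (∑ k ∈ Finset.Icc 1 n, Real.sqrt k))
      atTop (nhds 1) ∧
    Tendsto (fun n : ℕ =>
        (∑ k ∈ Finset.Icc 1 n, (smallDivSum k : ℝ)) / ((2 / 3) * (n : ℝ) ^ ((3 : ℝ) / 2)))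
      atTop (nhds 1) := by
  set F : ℕ → ℝ := fun n => ∑ k ∈ Finset.Icc 1 n, (smallDivSum k : ℝ) with hF
  set G : ℕ → ℝ := fun n => ∑ k ∈ Finset.Icc 1 n, Real.sqrt k with hG
  set D : ℕ → ℝ := fun n => (2/3) * (n:ℝ) ^ ((3:ℝ)/2) with hD
  set r : ℕ → ℝ := fun n => (Nat.sqrt n : ℝ) * (Real.sqrt n)⁻¹ with hrdef
  set e : ℕ → ℝ := fun n => (Real.sqrt n)⁻¹ with hedef
  -- basic facts for n ≥ 1
  have basic : ∀ n : ℕ, 1 ≤ n → 0 < Real.sqrt n ∧ Real.sqrt n * Real.sqrt n = (n:ℝ) ∧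
      D n = (2/3) * Real.sqrt n ^ 3 ∧ 0 < D n := by
    intro n hn
    have h0 : (0:ℝ) < n := by exact_mod_cast hn
    have hs0 : 0 < Real.sqrt n := Real.sqrt_pos.2 h0
    have hsq : Real.sqrt n * Real.sqrt n = (n:ℝ) := Real.mul_self_sqrt h0.le
    have hDn : D n = (2/3) * Real.sqrt n ^ 3 := by simp only [hD]; rw [rpow32 h0.le]
    exact ⟨hs0, hsq, hDn, by rw [hDn]; positivity⟩
  -- second conjunct
  have h2 : Tendsto (fun n => F n / D n) atTop (nhds 1) := by
    have hA : Tendsto (fun n => (3/2) * (r n - (2*(r n)^3 + 3*(r n)^2 * e n + (r n) * (e n)^2)/6))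
        atTop (nhds ((3/2) * (1 - (2*1^3 + 3*1^2*0 + 1*0^2)/6))) :=
      tendsto_const_nhds.mul (hr.sub ((((tendsto_const_nhds.mul (hr.pow 3)).add
        ((tendsto_const_nhds.mul (hr.pow 2)).mul he)).add (hr.mul (he.pow 2))).div_const 6))
    have hB : Tendsto (fun n => (3/2) * (r n - (2*(r n)^3 + 3*(r n)^2 * e n + (r n) * (e n)^2)/6)
          + (3/4)*((r n)^2 * e n + (r n)*(e n)^2))
        atTop (nhds ((3/2) * (1 - (2*1^3 + 3*1^2*0 + 1*0^2)/6) + (3/4)*(1^2*0 + 1*0^2))) :=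
      hA.add (tendsto_const_nhds.mul (((hr.pow 2).mul he).add (hr.mul (he.pow 2))))
    norm_num at hA hB
    refine tendsto_of_tendsto_of_tendsto_of_le_of_le' hA hB ?_ ?_
    · filter_upwards [eventually_ge_atTop 1] with n hn
      obtain ⟨hs0, hsq, hDn, hD0⟩ := basic n hn
      have hAeq : (3/2) * (r n - (2*(r n)^3 + 3*(r n)^2 * e n + (r n) * (e n)^2)/6)
          = ((Nat.sqrt n : ℝ)*n - (Nat.sqrt n)*((Nat.sqrt n)+1)*(2*(Nat.sqrt n)+1)/6) / D n := by
        simp only [hDn, hrdef, hedef]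
        set t := Real.sqrt (n:ℝ) with ht
        have hn2 : (n:ℝ) = t^2 := by rw [sq, hsq]
        rw [hn2]
        field_simp
        ring
      rw [hAeq]
      exact div_le_div_of_nonneg_right (S_bounds n).1 hD0.le
    · filter_upwards [eventually_ge_atTop 1] with n hn
      obtain ⟨hs0, hsq, hDn, hD0⟩ := basic n hn
      have hBeq : (3/2) * (r n - (2*(r n)^3 + 3*(r n)^2 * e n + (r n) * (e n)^2)/6)
            + (3/4)*((r n)^2 * e n + (r n)*(e n)^2)
          = ((Nat.sqrt n : ℝ)*n - (Nat.sqrt n)*((Nat.sqrt n)+1)*(2*(Nat.sqrt n)+1)/6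
            + (Nat.sqrt n)*((Nat.sqrt n)+1)/2) / D n := by
        simp only [hDn, hrdef, hedef]
        set t := Real.sqrt (n:ℝ) with ht
        have hn2 : (n:ℝ) = t^2 := by rw [sq, hsq]
        rw [hn2]
        field_simp
        ring
      rw [hBeq]
      exact div_le_div_of_nonneg_right (S_bounds n).2 hD0.le
  -- the sqrt-sum ratio
  have hGD : Tendsto (fun n => G n / D n) atTop (nhds 1) := by
    have hU : Tendsto (fun n => (1 + e n)^3) atTop (nhds ((1+0)^3)) :=
      (tendsto_const_nhds.add he).pow 3
    norm_num at hU
    refine tendsto_of_tendsto_of_tendsto_of_le_of_le' tendsto_const_nhds hU ?_ ?_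
    · filter_upwards [eventually_ge_atTop 1] with n hn
      obtain ⟨hs0, hsq, hDn, hD0⟩ := basic n hn
      rw [le_div_iff₀ hD0, one_mul, hDn]
      exact sumsqrt_lb n
    · filter_upwards [eventually_ge_atTop 1] with n hn
      obtain ⟨hs0, hsq, hDn, hD0⟩ := basic n hn
      have step1 : Real.sqrt ((n:ℝ)+1) ≤ Real.sqrt n + 1 := by
        have : ((n:ℝ)+1) ≤ (Real.sqrt n + 1)^2 := by nlinarith [hs0.le]
        calc Real.sqrt ((n:ℝ)+1) ≤ Real.sqrt ((Real.sqrt n + 1)^2) := Real.sqrt_le_sqrt this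
          _ = Real.sqrt n + 1 := Real.sqrt_sq (by positivity)
      have step2 : G n ≤ (2/3) * (Real.sqrt n + 1)^3 := by
        refine (sumsqrt_ub n).trans ?_
        have h3 : Real.sqrt ((n:ℝ)+1) ^ 3 ≤ (Real.sqrt n + 1)^3 :=
          pow_le_pow_left₀ (Real.sqrt_nonneg _) step1 3
        linarith
      rw [div_le_iff₀ hD0, hDn]
      calc G n ≤ (2/3) * (Real.sqrt n + 1)^3 := step2
        _ = (1 + e n)^3 * ((2/3) * Real.sqrt n ^ 3) := by
            rw [hedef]; field_simp
  -- first conjunct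
  have h1 : Tendsto (fun n => F n / G n) atTop (nhds 1) := by
    have := h2.div hGD one_ne_zero
    norm_num at this
    refine this.congr' ?_
    filter_upwards [eventually_ge_atTop 1] with n hn
    obtain ⟨hs0, hsq, hDn, hD0⟩ := basic n hn
    have hG0 : 0 < G n := by
      have hlb := sumsqrt_lb n
      rw [← hDn] at hlb
      exact hD0.trans_le hlb
    have hd' := hD0.ne'
    have hg' := hG0.ne'
    simp only [Pi.div_apply]
    field_simp
  exact ⟨h1, h2⟩
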